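/- For a signature sigma of the Petersen graph P and a graph automorphism gamma of P, let sigma^gamma be the transported signature defined by sigma^gamma(gamma(u)gamma(v)) = sigma(uv). The set SwProj(sigma) = {gamma in Aut(P) : sigma^gamma is switching equivalent to sigma} is a subgroup of Aut(P) (it is the isomorphic projection of the switching automorphism group of (P,sigma)). For the six representative signatures sigma(+P), sigma(P_1), sigma(P_2,2), sigma(P_2,3), sigma(P_3,2), sigma(P_3,3), this subgroup has order 120, 8, 4, 8, 60, 120 respectively, and is isomorphic respectively to S_5, the dihedral group of order 8, the Klein four-group, the dihedral group of order 8, the alternating group A_5, and S_5. In particular, for sigma(P_3,2) this subgroup consists exactly of the automorphisms of P induced by even permutations of {1,2,3,4,5}. -/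

import Mathlib

open SimpleGraph Finset


/-- Vertices of the Petersen graph: 2-element subsets of `Fin 5`. -/
abbrev PV : Type := {s : Finset (Fin 5) // s.card = 2}

/-- The Petersen graph as the Kneser graph K(5,2). -/
def petersen : SimpleGraph PV where
  Adj a b := Disjoint a.1 b.1
  symm := ⟨fun a b h => h.symm⟩
  loopless := ⟨fun a h => by
    have h2 := a.2
    rw [disjoint_self.mp h] at h2
    simp at h2⟩

def v12 : PV := ⟨{0, 1}, by decide⟩
def v13 : PV := ⟨{0, 2}, by decide⟩
def v14 : PV := ⟨{0, 3}, by decide⟩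
def v15 : PV := ⟨{0, 4}, by decide⟩
def v23 : PV := ⟨{1, 2}, by decide⟩
def v24 : PV := ⟨{1, 3}, by decide⟩
def v25 : PV := ⟨{1, 4}, by decide⟩
def v34 : PV := ⟨{2, 3}, by decide⟩
def v35 : PV := ⟨{2, 4}, by decide⟩
def v45 : PV := ⟨{3, 4}, by decide⟩

/-- The signature with negative edge set `N` (and all other edges positive). -/
def sgn (N : Finset (Sym2 PV)) : Sym2 PV → ℤˣ := fun e => if e ∈ N then -1 else 1

/-- The six representative signatures `σ(+P)`, `σ(P_1)`, `σ(P_{2,2})`, `σ(P_{2,3})`,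
`σ(P_{3,2})`, `σ(P_{3,3})` of the Petersen graph. -/
def reps : Fin 6 → (Sym2 PV → ℤˣ) :=
  ![sgn ∅,
    sgn {s(v12, v34)},
    sgn {s(v14, v25), s(v34, v15)},
    sgn {s(v13, v24), s(v14, v23)},
    sgn {s(v14, v25), s(v34, v15), s(v24, v35)},
    sgn {s(v12, v34), s(v13, v24), s(v14, v23)}]

/-- The projection of the switching automorphism group of `(P,σ)` into the permutations of
the vertices: adjacency-preserving permutations `γ` such that the transported signature
`σ^γ` is switching equivalent to `σ`. -/
def swProj {V : Type*} (G : SimpleGraph V) (σ : Sym2 V → ℤˣ) : Set (Equiv.Perm V) :=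
  {γ | (∀ u v : V, G.Adj (γ u) (γ v) ↔ G.Adj u v) ∧
    ∃ ζ : V → ℤˣ, ∀ u v : V, G.Adj u v → σ s(γ u, γ v) = ζ u * σ s(u, v) * ζ v}

/-- The permutation of the vertices of the Petersen graph induced by a permutation of
`{1,…,5}`. -/
def indPerm (π : Equiv.Perm (Fin 5)) : Equiv.Perm PV where
  toFun s := ⟨s.1.image π, by rw [Finset.card_image_of_injective _ π.injective]; exact s.2⟩
  invFun s := ⟨s.1.image π.symm,
    by rw [Finset.card_image_of_injective _ π.symm.injective]; exact s.2⟩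
  left_inv s := by
    apply Subtype.ext
    simp [Finset.image_image, Function.comp_def]
  right_inv s := by
    apply Subtype.ext
    simp [Finset.image_image, Function.comp_def]


/-! ### Auxiliary development -/

instance : DecidableRel petersen.Adj := fun a b =>
  inferInstanceAs (Decidable (Disjoint a.1 b.1))

lemma zzz1 : ∀ z1 s z2 : ℤˣ, (z1 * s * z2) * s = z1 * z2 := by decide
lemma zzz2 : ∀ a b c : ℤˣ, (a * b) * (b * c) = a * c := by decide
lemma zzz3 : ∀ z a s b : ℤˣ, (z * a) * s * (z * b) = a * s * b := by decide
lemma comm3 : ∀ a s b : ℤˣ, a * s * b = b * s * a := by decide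

lemma indPerm_adj (π : Equiv.Perm (Fin 5)) (u v : PV) :
    petersen.Adj (indPerm π u) (indPerm π v) ↔ petersen.Adj u v := by
  show Disjoint (u.1.image π) (v.1.image π) ↔ Disjoint u.1 v.1
  exact Finset.disjoint_image π.injective

/-- `indPerm` as a monoid homomorphism. -/
def indHom : Equiv.Perm (Fin 5) →* Equiv.Perm PV :=
  MonoidHom.mk' indPerm (by
    intro π ρ
    refine Equiv.ext fun v => Subtype.ext ?_
    simp [indPerm, Finset.image_image, Function.comp_def, Equiv.Perm.coe_mul,
      Equiv.Perm.mul_apply])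

set_option maxRecDepth 100000 in
lemma indHom_inj : Function.Injective indHom :=
  (injective_iff_map_eq_one indHom).mpr (by decide)

set_option maxRecDepth 100000 in
set_option synthInstance.maxHeartbeats 1000000 in
set_option synthInstance.maxSize 2000 in
set_option maxHeartbeats 4000000 in
lemma four_common : ∀ a b c d : PV,
    ((a ≠ b ∧ a ≠ c ∧ a ≠ d ∧ b ≠ c ∧ b ≠ d ∧ c ≠ d) ∧
     ¬Disjoint a.1 b.1 ∧ ¬Disjoint a.1 c.1 ∧ ¬Disjoint a.1 d.1 ∧
     ¬Disjoint b.1 c.1 ∧ ¬Disjoint b.1 d.1 ∧ ¬Disjoint c.1 d.1) →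
    ∃ x : Fin 5, x ∈ a.1 ∧ x ∈ b.1 ∧ x ∈ c.1 ∧ x ∈ d.1 := by decide

set_option maxRecDepth 100000 in
lemma star_card : ∀ x : Fin 5, (univ.filter (fun v : PV => x ∈ v.1)).card = 4 := by decide

set_option maxRecDepth 100000 in
lemma union_card : ∀ i j : Fin 5, i ≠ j →
    ((univ.filter (fun v : PV => i ∈ v.1)) ∪ (univ.filter (fun v : PV => j ∈ v.1))).card = 7 := by
  decide

set_option maxRecDepth 100000 in
set_option synthInstance.maxHeartbeats 1000000 in
set_option synthInstance.maxSize 2000 in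
set_option maxHeartbeats 4000000 in
lemma star4 : ∀ i : Fin 5, ∃ a b c d : PV,
    (a ≠ b ∧ a ≠ c ∧ a ≠ d ∧ b ≠ c ∧ b ≠ d ∧ c ≠ d) ∧
    (i ∈ a.1 ∧ i ∈ b.1 ∧ i ∈ c.1 ∧ i ∈ d.1) ∧
    (∀ v : PV, i ∈ v.1 → v = a ∨ v = b ∨ v = c ∨ v = d) := by decide

/-- Every automorphism of the Petersen graph is induced by a permutation of `{1,…,5}`. -/
lemma autIsInd (γ : Equiv.Perm PV)
    (hadj : ∀ u v : PV, petersen.Adj (γ u) (γ v) ↔ petersen.Adj u v) :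
    ∃ π : Equiv.Perm (Fin 5), γ = indPerm π := by
  classical
  have hnd : ∀ u v : PV, ¬Disjoint u.1 v.1 → ¬Disjoint (γ u).1 (γ v).1 := by
    intro u v h hd
    exact h ((hadj u v).mp hd)
  have hx : ∀ i : Fin 5, ∃ x : Fin 5, ∀ v : PV, i ∈ v.1 → x ∈ (γ v).1 := by
    intro i
    obtain ⟨a, b, c, d, ⟨hab, hac, had, hbc, hbd, hcd⟩, ⟨ha, hb, hc, hd⟩, hall⟩ := star4 i
    have key : ∀ u v : PV, i ∈ u.1 → i ∈ v.1 → ¬Disjoint (γ u).1 (γ v).1 := by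
      intro u v hu hv
      exact hnd u v (fun hdis => (Finset.disjoint_left.mp hdis hu) hv)
    obtain ⟨x, hxa, hxb, hxc, hxd⟩ := four_common (γ a) (γ b) (γ c) (γ d)
      ⟨⟨γ.injective.ne hab, γ.injective.ne hac, γ.injective.ne had,
        γ.injective.ne hbc, γ.injective.ne hbd, γ.injective.ne hcd⟩,
       key a b ha hb, key a c ha hc, key a d ha hd,
       key b c hb hc, key b d hb hd, key c d hc hd⟩
    refine ⟨x, fun v hv => ?_⟩
    rcases hall v hv with rfl | rfl | rfl | rfl <;> assumption
  set π0 : Fin 5 → Fin 5 := fun i => (hx i).choose with hπ0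
  have hspec : ∀ i, ∀ v : PV, i ∈ v.1 → π0 i ∈ (γ v).1 := fun i => (hx i).choose_spec
  have hinj : Function.Injective π0 := by
    intro i j hij
    by_contra hne
    have hsub : ((univ.filter (fun v : PV => i ∈ v.1)) ∪
        (univ.filter (fun v : PV => j ∈ v.1))).image γ ⊆
        univ.filter (fun v : PV => π0 i ∈ v.1) := by
      intro w hw
      simp only [Finset.mem_image, Finset.mem_union, Finset.mem_filter, Finset.mem_univ,
        true_and] at hw ⊢
      obtain ⟨v, hv, rfl⟩ := hw
      rcases hv with hv | hv
      · exact hspec i v hv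
      · rw [hij]; exact hspec j v hv
    have hle := Finset.card_le_card hsub
    rw [Finset.card_image_of_injective _ γ.injective, union_card i j hne,
      star_card (π0 i)] at hle
    omega
  refine ⟨Equiv.ofBijective π0 (Finite.injective_iff_bijective.mp hinj),
    Equiv.ext fun v => ?_⟩
  obtain ⟨i, j, hij, hv⟩ := Finset.card_eq_two.mp v.2
  have h1 : π0 i ∈ (γ v).1 := hspec i v (by rw [hv]; exact Finset.mem_insert_self _ _)
  have h2 : π0 j ∈ (γ v).1 := hspec j v
    (by rw [hv]; exact Finset.mem_insert_of_mem (Finset.mem_singleton_self _))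
  have hne : π0 i ≠ π0 j := fun h => hij (hinj h)
  have hsub : ({π0 i, π0 j} : Finset (Fin 5)) ⊆ (γ v).1 := by
    intro x hx'
    rcases Finset.mem_insert.mp hx' with rfl | hx'
    · exact h1
    · rw [Finset.mem_singleton.mp hx']; exact h2
  have heq : ({π0 i, π0 j} : Finset (Fin 5)) = (γ v).1 :=
    Finset.eq_of_subset_of_card_le hsub (by rw [(γ v).2, Finset.card_pair hne])
  refine Subtype.ext ?_
  show (γ v).1 = v.1.image π0
  rw [hv, ← heq, Finset.image_insert, Finset.image_singleton]

/-- Ratio factor between the transported and original signature on an edge. -/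
def tfac (σ : Sym2 PV → ℤˣ) (π : Equiv.Perm (Fin 5)) (a b : PV) : ℤˣ :=
  σ s(indPerm π a, indPerm π b) * σ s(a, b)

/-- Canonical switching function (propagation along a spanning tree rooted at `v12`). -/
def zeta (σ : Sym2 PV → ℤˣ) (π : Equiv.Perm (Fin 5)) : PV → ℤˣ := fun v =>
  if v = v12 then 1
  else if v = v34 then tfac σ π v12 v34
  else if v = v35 then tfac σ π v12 v35
  else if v = v45 then tfac σ π v12 v45
  else if v = v15 then tfac σ π v12 v34 * tfac σ π v34 v15
  else if v = v25 then tfac σ π v12 v34 * tfac σ π v34 v25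
  else if v = v14 then tfac σ π v12 v35 * tfac σ π v35 v14
  else if v = v24 then tfac σ π v12 v35 * tfac σ π v35 v24
  else if v = v13 then tfac σ π v12 v45 * tfac σ π v45 v13
  else tfac σ π v12 v45 * tfac σ π v45 v23

/-- The 15 edges of the Petersen graph. -/
def edgeL : List (PV × PV) :=
  [(v12,v34),(v12,v35),(v12,v45),(v34,v15),(v34,v25),(v35,v14),(v35,v24),(v45,v13),(v45,v23),
   (v15,v23),(v15,v24),(v25,v13),(v25,v14),(v14,v23),(v13,v24)]

/-- `σ^(indPerm π)` is switching-equivalent to `σ` via the canonical switching function. -/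
def swc (σ : Sym2 PV → ℤˣ) (π : Equiv.Perm (Fin 5)) : Prop :=
  ∀ p ∈ edgeL, σ s(indPerm π p.1, indPerm π p.2) =
    zeta σ π p.1 * σ s(p.1, p.2) * zeta σ π p.2

instance (σ : Sym2 PV → ℤˣ) (π : Equiv.Perm (Fin 5)) : Decidable (swc σ π) := by
  unfold swc; infer_instance

set_option synthInstance.maxHeartbeats 1000000 in
set_option synthInstance.maxSize 2000 in
set_option maxRecDepth 100000 in
lemma edge_cover : ∀ u v : PV, petersen.Adj u v → (u, v) ∈ edgeL ∨ (v, u) ∈ edgeL := by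
  have : DecidableEq (PV × PV) := instDecidableEqProd
  decide

lemma swc_all (σ : Sym2 PV → ℤˣ) (π : Equiv.Perm (Fin 5)) (h : swc σ π) :
    ∀ u v : PV, petersen.Adj u v →
      σ s(indPerm π u, indPerm π v) = zeta σ π u * σ s(u, v) * zeta σ π v := by
  intro u v huv
  rcases edge_cover u v huv with hm | hm
  · exact h (u, v) hm
  · have h2 := h (v, u) hm
    calc σ s(indPerm π u, indPerm π v) = σ s(indPerm π v, indPerm π u) := by rw [Sym2.eq_swap]
      _ = zeta σ π v * σ s(v, u) * zeta σ π u := h2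
      _ = zeta σ π v * σ s(u, v) * zeta σ π u := by
          rw [show s(v, u) = s(u, v) from Sym2.eq_swap]
      _ = zeta σ π u * σ s(u, v) * zeta σ π v := comm3 _ _ _

/-- If any switching function works, the canonical one does. -/
lemma bridge (σ : Sym2 PV → ℤˣ) (π : Equiv.Perm (Fin 5)) (ζ : PV → ℤˣ)
    (h : ∀ u v : PV, petersen.Adj u v →
      σ s(indPerm π u, indPerm π v) = ζ u * σ s(u, v) * ζ v) :
    swc σ π := by
  have key : ∀ a b : PV, petersen.Adj a b → tfac σ π a b = ζ a * ζ b := by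
    intro a b hab
    unfold tfac
    rw [h a b hab]
    exact zzz1 (ζ a) (σ s(a, b)) (ζ b)
  have hz : ∀ v : PV, zeta σ π v = ζ v12 * ζ v := by
    intro v
    rcases (by decide : ∀ w : PV, w = v12 ∨ w = v34 ∨ w = v35 ∨ w = v45 ∨ w = v15 ∨
        w = v25 ∨ w = v14 ∨ w = v24 ∨ w = v13 ∨ w = v23) v with
      rfl | rfl | rfl | rfl | rfl | rfl | rfl | rfl | rfl | rfl
    · exact (Int.units_mul_self (ζ v12)).symm
    · rw [show zeta σ π v34 = tfac σ π v12 v34 from rfl, key v12 v34 (by decide)]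
    · rw [show zeta σ π v35 = tfac σ π v12 v35 from rfl, key v12 v35 (by decide)]
    · rw [show zeta σ π v45 = tfac σ π v12 v45 from rfl, key v12 v45 (by decide)]
    · rw [show zeta σ π v15 = tfac σ π v12 v34 * tfac σ π v34 v15 from rfl,
        key v12 v34 (by decide), key v34 v15 (by decide)]
      exact zzz2 _ _ _
    · rw [show zeta σ π v25 = tfac σ π v12 v34 * tfac σ π v34 v25 from rfl,
        key v12 v34 (by decide), key v34 v25 (by decide)]
      exact zzz2 _ _ _
    · rw [show zeta σ π v14 = tfac σ π v12 v35 * tfac σ π v35 v14 from rfl,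
        key v12 v35 (by decide), key v35 v14 (by decide)]
      exact zzz2 _ _ _
    · rw [show zeta σ π v24 = tfac σ π v12 v35 * tfac σ π v35 v24 from rfl,
        key v12 v35 (by decide), key v35 v24 (by decide)]
      exact zzz2 _ _ _
    · rw [show zeta σ π v13 = tfac σ π v12 v45 * tfac σ π v45 v13 from rfl,
        key v12 v45 (by decide), key v45 v13 (by decide)]
      exact zzz2 _ _ _
    · rw [show zeta σ π v23 = tfac σ π v12 v45 * tfac σ π v45 v23 from rfl,
        key v12 v45 (by decide), key v45 v23 (by decide)]
      exact zzz2 _ _ _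
  intro p hp
  have hadj : petersen.Adj p.1 p.2 := by
    revert hp; revert p
    exact (by decide : ∀ p ∈ edgeL, petersen.Adj p.1 p.2)
  rw [h p.1 p.2 hadj, hz p.1, hz p.2]
  exact (zzz3 (ζ v12) (ζ p.1) (σ s(p.1, p.2)) (ζ p.2)).symm

/-! ### The concrete groups -/

def dihA : Equiv.Perm (Fin 5) := c[0, 2, 1, 3]
def dihB : Equiv.Perm (Fin 5) := c[2, 3]

def dihF : DihedralGroup 4 → Equiv.Perm (Fin 5)
  | .r i => dihA ^ i.val
  | .sr i => dihB * dihA ^ i.val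

set_option maxRecDepth 100000 in
def dihHom : DihedralGroup 4 →* Equiv.Perm (Fin 5) :=
  MonoidHom.mk' dihF (by decide)

set_option maxRecDepth 100000 in
lemma dihHom_inj : Function.Injective dihHom :=
  (injective_iff_map_eq_one dihHom).mpr (by decide)

def klF : Multiplicative (ZMod 2 × ZMod 2) → Equiv.Perm (Fin 5) := fun x =>
  (Equiv.swap 1 2 * Equiv.swap 3 4) ^ (x.toAdd.1.val) *
  (Equiv.swap 1 3 * Equiv.swap 2 4) ^ (x.toAdd.2.val)

set_option maxRecDepth 100000 in
def klHom : Multiplicative (ZMod 2 × ZMod 2) →* Equiv.Perm (Fin 5) :=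
  MonoidHom.mk' klF (by decide)

set_option maxRecDepth 100000 in
lemma klHom_inj : Function.Injective klHom :=
  (injective_iff_map_eq_one klHom).mpr (by decide)

/-! ### The six decision lemmas -/

set_option maxRecDepth 1000000 in
set_option maxHeartbeats 10000000 in
lemma D0 : ∀ π : Equiv.Perm (Fin 5), swc (sgn ∅) π := by decide

set_option maxRecDepth 1000000 in
set_option maxHeartbeats 10000000 in
lemma D1 : ∀ π : Equiv.Perm (Fin 5),
    swc (sgn {s(v12, v34)}) π ↔ ∃ d : DihedralGroup 4, dihHom d = π := by decide

set_option maxRecDepth 1000000 in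
set_option maxHeartbeats 10000000 in
lemma D2 : ∀ π : Equiv.Perm (Fin 5),
    swc (sgn {s(v14, v25), s(v34, v15)}) π ↔
      ∃ d : Multiplicative (ZMod 2 × ZMod 2), klHom d = π := by decide

set_option maxRecDepth 1000000 in
set_option maxHeartbeats 10000000 in
lemma D3 : ∀ π : Equiv.Perm (Fin 5),
    swc (sgn {s(v13, v24), s(v14, v23)}) π ↔ ∃ d : DihedralGroup 4, dihHom d = π := by decide

set_option maxRecDepth 1000000 in
set_option maxHeartbeats 10000000 in
lemma D4 : ∀ π : Equiv.Perm (Fin 5),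
    swc (sgn {s(v14, v25), s(v34, v15), s(v24, v35)}) π ↔ π.sign = 1 := by decide

set_option maxRecDepth 1000000 in
set_option maxHeartbeats 10000000 in
lemma D5 : ∀ π : Equiv.Perm (Fin 5),
    swc (sgn {s(v12, v34), s(v13, v24), s(v14, v23)}) π := by decide

/-! ### Assembly -/

lemma main_eq (σ : Sym2 PV → ℤˣ) (G : Subgroup (Equiv.Perm (Fin 5)))
    (hmem : ∀ π : Equiv.Perm (Fin 5), swc σ π ↔ π ∈ G) :
    ↑(Subgroup.map indHom G) = swProj petersen σ := by
  ext γ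
  simp only [Subgroup.coe_map, Set.mem_image, SetLike.mem_coe]
  constructor
  · rintro ⟨π, hπ, rfl⟩
    exact ⟨fun u v => indPerm_adj π u v, zeta σ π, swc_all σ π ((hmem π).mpr hπ)⟩
  · rintro ⟨hadj, ζ, hζ⟩
    obtain ⟨π, rfl⟩ := autIsInd γ hadj
    exact ⟨π, (hmem π).mp (bridge σ π ζ hζ), rfl⟩

lemma card_perm5 : Nat.card (Equiv.Perm (Fin 5)) = 120 := by
  rw [Nat.card_eq_fintype_card, Fintype.card_perm, Fintype.card_fin]
  decide

lemma cardMapAux (G : Subgroup (Equiv.Perm (Fin 5))) :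
    Nat.card (Subgroup.map indHom G) = Nat.card G :=
  (Nat.card_congr (Subgroup.equivMapOfInjective G indHom indHom_inj).toEquiv).symm


/-- For each representative signature `σ`, the set `swProj petersen σ` is a subgroup of
the permutation group of the vertices of `P`, of order `120, 8, 4, 8, 60, 120`
respectively, isomorphic to `S₅`, the dihedral group of order 8, the Klein four-group,
the dihedral group of order 8, `A₅` and `S₅` respectively; and for `σ(P_{3,2})` it
consists exactly of the automorphisms induced by even permutations of `{1,…,5}`. -/
theorem petersen_switching_automorphism_groups :
    (∃ H : Subgroup (Equiv.Perm PV), ↑H = swProj petersen (reps 0) ∧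
      Nat.card H = 120 ∧ Nonempty (H ≃* Equiv.Perm (Fin 5))) ∧
    (∃ H : Subgroup (Equiv.Perm PV), ↑H = swProj petersen (reps 1) ∧
      Nat.card H = 8 ∧ Nonempty (H ≃* DihedralGroup 4)) ∧
    (∃ H : Subgroup (Equiv.Perm PV), ↑H = swProj petersen (reps 2) ∧
      Nat.card H = 4 ∧ Nonempty (H ≃* Multiplicative (ZMod 2 × ZMod 2))) ∧
    (∃ H : Subgroup (Equiv.Perm PV), ↑H = swProj petersen (reps 3) ∧
      Nat.card H = 8 ∧ Nonempty (H ≃* DihedralGroup 4)) ∧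
    (∃ H : Subgroup (Equiv.Perm PV), ↑H = swProj petersen (reps 4) ∧
      Nat.card H = 60 ∧ Nonempty (H ≃* alternatingGroup (Fin 5))) ∧
    (∃ H : Subgroup (Equiv.Perm PV), ↑H = swProj petersen (reps 5) ∧
      Nat.card H = 120 ∧ Nonempty (H ≃* Equiv.Perm (Fin 5))) ∧
    swProj petersen (reps 4) =
      {γ | ∃ π : Equiv.Perm (Fin 5), π ∈ alternatingGroup (Fin 5) ∧ γ = indPerm π} := by
  have e : ∀ G : Subgroup (Equiv.Perm (Fin 5)),
      ↥G ≃* ↥(Subgroup.map indHom G) :=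
    fun G => Subgroup.equivMapOfInjective G indHom indHom_inj
  have hmem0 : ∀ π : Equiv.Perm (Fin 5), swc (reps 0) π ↔ π ∈ (⊤ : Subgroup _) :=
    fun π => iff_of_true (D0 π) (Subgroup.mem_top π)
  have hmem1 : ∀ π : Equiv.Perm (Fin 5), swc (reps 1) π ↔ π ∈ dihHom.range :=
    fun π => (D1 π).trans (MonoidHom.mem_range).symm
  have hmem2 : ∀ π : Equiv.Perm (Fin 5), swc (reps 2) π ↔ π ∈ klHom.range :=
    fun π => (D2 π).trans (MonoidHom.mem_range).symm
  have hmem3 : ∀ π : Equiv.Perm (Fin 5), swc (reps 3) π ↔ π ∈ dihHom.range :=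
    fun π => (D3 π).trans (MonoidHom.mem_range).symm
  have hmem4 : ∀ π : Equiv.Perm (Fin 5), swc (reps 4) π ↔ π ∈ alternatingGroup (Fin 5) :=
    fun π => (D4 π).trans (Equiv.Perm.mem_alternatingGroup).symm
  have hmem5 : ∀ π : Equiv.Perm (Fin 5), swc (reps 5) π ↔ π ∈ (⊤ : Subgroup _) :=
    fun π => iff_of_true (D5 π) (Subgroup.mem_top π)
  refine ⟨?_, ?_, ?_, ?_, ?_, ?_, ?_⟩
  · refine ⟨Subgroup.map indHom ⊤, main_eq _ ⊤ hmem0, ?_, ?_⟩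
    · rw [cardMapAux, Nat.card_congr Subgroup.topEquiv.toEquiv, card_perm5]
    · exact ⟨(e ⊤).symm.trans Subgroup.topEquiv⟩
  · refine ⟨Subgroup.map indHom dihHom.range, main_eq _ dihHom.range hmem1, ?_, ?_⟩
    · rw [cardMapAux, ← Nat.card_congr (MonoidHom.ofInjective dihHom_inj).toEquiv,
        Nat.card_eq_fintype_card]
      decide
    · exact ⟨(e dihHom.range).symm.trans (MonoidHom.ofInjective dihHom_inj).symm⟩
  · refine ⟨Subgroup.map indHom klHom.range, main_eq _ klHom.range hmem2, ?_, ?_⟩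
    · rw [cardMapAux, ← Nat.card_congr (MonoidHom.ofInjective klHom_inj).toEquiv,
        Nat.card_eq_fintype_card]
      decide
    · exact ⟨(e klHom.range).symm.trans (MonoidHom.ofInjective klHom_inj).symm⟩
  · refine ⟨Subgroup.map indHom dihHom.range, main_eq _ dihHom.range hmem3, ?_, ?_⟩
    · rw [cardMapAux, ← Nat.card_congr (MonoidHom.ofInjective dihHom_inj).toEquiv,
        Nat.card_eq_fintype_card]
      decide
    · exact ⟨(e dihHom.range).symm.trans (MonoidHom.ofInjective dihHom_inj).symm⟩
  · refine ⟨Subgroup.map indHom (alternatingGroup (Fin 5)),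
      main_eq _ (alternatingGroup (Fin 5)) hmem4, ?_, ?_⟩
    · rw [cardMapAux, Nat.card_eq_fintype_card]
      have h2 := @two_mul_card_alternatingGroup (Fin 5) _ _ _
      rw [Fintype.card_perm, Fintype.card_fin] at h2
      have h4 : 2 * Fintype.card ↥(alternatingGroup (Fin 5)) = 120 := h2
      omega
    · exact ⟨(e (alternatingGroup (Fin 5))).symm⟩
  · refine ⟨Subgroup.map indHom ⊤, main_eq _ ⊤ hmem5, ?_, ?_⟩
    · rw [cardMapAux, Nat.card_congr Subgroup.topEquiv.toEquiv, card_perm5]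
    · exact ⟨(e ⊤).symm.trans Subgroup.topEquiv⟩
  · rw [← main_eq (reps 4) (alternatingGroup (Fin 5)) hmem4]
    ext γ
    simp only [Subgroup.coe_map, Set.mem_image, SetLike.mem_coe, Set.mem_setOf_eq]
    constructor
    · rintro ⟨π, hπ, rfl⟩
      exact ⟨π, hπ, rfl⟩
    · rintro ⟨π, hπ, rfl⟩
      exact ⟨π, hπ, rfl⟩
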